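/- arXiv:2505.15643 — 4 statements merged into one kernel-verified Lean document; each statement's English description precedes it below -/
import Mathlib

section
/- Let w₁, w_a > 0, σ > 0, and μ₁ > μ_a. Then the infimum over λ with λ_a ≥ λ₁ of w₁(μ₁−λ₁)²/(2σ²) + w_a(μ_a−λ_a)²/(2σ²) equals (w₁ w_a)/(w₁ + w_a) · (μ₁ − μ_a)²/(2σ²). -/
/-- Two-arm Gaussian constrained KL-minimization: for `w₁, w_a > 0`, `σ > 0`, `μ₁ > μ_a`,
the infimum over `λ₁ ≤ λ_a` of `w₁(μ₁−λ₁)²/(2σ²) + w_a(μ_a−λ_a)²/(2σ²)` equals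
`(w₁ w_a)/(w₁ + w_a) · (μ₁ − μ_a)²/(2σ²)`. -/
theorem stmt_6 (w1 wa σ μ1 μa : ℝ) (hw1 : 0 < w1) (hwa : 0 < wa) (hσ : 0 < σ)
    (hμ : μa < μ1) :
    IsGLB {z : ℝ | ∃ l1 la : ℝ, l1 ≤ la ∧
        z = w1 * (μ1 - l1) ^ 2 / (2 * σ ^ 2) + wa * (μa - la) ^ 2 / (2 * σ ^ 2)}
      (w1 * wa / (w1 + wa) * ((μ1 - μa) ^ 2 / (2 * σ ^ 2))) := by
  have hs : (0:ℝ) < 2 * σ ^ 2 := by positivity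
  have hw : (0:ℝ) < w1 + wa := by linarith
  constructor
  · rintro z ⟨l1, la, hle, rfl⟩
    have key : w1 * wa / (w1 + wa) * (μ1 - μa) ^ 2 ≤
        w1 * (μ1 - l1) ^ 2 + wa * (μa - la) ^ 2 := by
      rw [div_mul_eq_mul_div, div_le_iff₀ hw]
      nlinarith [sq_nonneg (w1 * (μ1 - l1) + wa * (μa - la)),
        mul_nonneg (mul_nonneg hw1.le hwa.le)
          (mul_nonneg (by linarith : (0:ℝ) ≤ la - l1)
            (by linarith : (0:ℝ) ≤ (μ1 - l1) - (μa - la) + (μ1 - μa)))]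
    have h1 : w1 * wa / (w1 + wa) * ((μ1 - μa) ^ 2 / (2 * σ ^ 2)) =
        (w1 * wa / (w1 + wa) * (μ1 - μa) ^ 2) / (2 * σ ^ 2) := by ring
    have h2 : w1 * (μ1 - l1) ^ 2 / (2 * σ ^ 2) + wa * (μa - la) ^ 2 / (2 * σ ^ 2) =
        (w1 * (μ1 - l1) ^ 2 + wa * (μa - la) ^ 2) / (2 * σ ^ 2) := by ring
    rw [h1, h2]
    gcongr
  · intro b hb
    refine hb ⟨(w1 * μ1 + wa * μa) / (w1 + wa), (w1 * μ1 + wa * μa) / (w1 + wa),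
      le_refl _, ?_⟩
    field_simp
    ring
end

section
/- Let α > 0 and c₁, c₂ > 0 satisfy A := (1/α)·log c₂ + log(α/c₁) > 1. Then there exists x ≤ (α/c₁)·(A + √(2(A − 1))) such that c₁ x ≥ log(c₂ x^α). -/
/-- Let `α > 0` and `c₁, c₂ > 0` with `A := (1/α)·log c₂ + log(α/c₁) > 1`. Then there
exists `x ≤ (α/c₁)·(A + √(2(A−1)))` with `c₁ x ≥ log(c₂ x^α)`. -/
theorem stmt_9 (α c1 c2 : ℝ) (hα : 0 < α) (hc1 : 0 < c1) (hc2 : 0 < c2)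
    (hA : 1 < (1 / α) * Real.log c2 + Real.log (α / c1)) :
    ∃ x : ℝ, 0 < x ∧
      x ≤ (α / c1) * (((1 / α) * Real.log c2 + Real.log (α / c1)) +
        Real.sqrt (2 * (((1 / α) * Real.log c2 + Real.log (α / c1)) - 1))) ∧
      Real.log (c2 * x ^ α) ≤ c1 * x := by
  set A := (1 / α) * Real.log c2 + Real.log (α / c1) with hAdef
  set s := Real.sqrt (2 * (A - 1)) with hsdef
  have hs : 0 ≤ s := Real.sqrt_nonneg _
  have hs2 : s ^ 2 = 2 * (A - 1) := Real.sq_sqrt (by linarith)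
  have hus : 0 < A + s := by linarith
  have hac : 0 < α / c1 := div_pos hα hc1
  refine ⟨(α / c1) * (A + s), mul_pos hac hus, le_refl _, ?_⟩
  have hx : (0:ℝ) < (α / c1) * (A + s) := mul_pos hac hus
  -- log(A+s) ≤ s
  have hlog : Real.log (A + s) ≤ s := by
    rw [Real.log_le_iff_le_exp hus]
    have := Real.quadratic_le_exp_of_nonneg hs
    nlinarith
  have hlogx : Real.log ((α / c1) * (A + s)) = Real.log (α / c1) + Real.log (A + s) :=
    Real.log_mul (ne_of_gt hac) (ne_of_gt hus)
  rw [Real.log_mul (ne_of_gt hc2) (by positivity), Real.log_rpow hx, hlogx]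
  have hAα : α * A = Real.log c2 + α * Real.log (α / c1) := by
    rw [hAdef]; field_simp
  have hc1x : c1 * ((α / c1) * (A + s)) = α * (A + s) := by field_simp
  rw [hc1x]
  nlinarith [mul_le_mul_of_nonneg_left hlog (le_of_lt hα)]
end

section
/- For all u > 0, the lower branch of the Lambert W function satisfies −1 − √(2u) − u < W₋₁(−e^{−u−1}) < −1 − √(2u) − (2/3)u. -/
open Real Set

private lemma lemA (t : ℝ) (ht : 0 < t) : 1 + t + t^2/2 < Real.exp t := by
  have := Real.sum_le_exp_of_nonneg ht.le 4
  simp [Finset.sum_range_succ, Nat.factorial] at this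
  nlinarith [pow_pos ht 3]

private lemma denom_pos (t : ℝ) : 0 < 1 + t + t^2/3 := by nlinarith [sq_nonneg (t+3/2)]

private lemma lemB (t : ℝ) (ht : 0 < t) : Real.exp (t - t^2/6) < 1 + t + t^2/3 := by
  set g : ℝ → ℝ := fun t => Real.log (1 + t + t^2/3) - t + t^2/6 with hg
  have hderiv : ∀ x : ℝ, HasDerivAt g ((1 + 2*x/3)/(1 + x + x^2/3) - 1 + x/3) x := by
    intro x
    have h1 : HasDerivAt (fun x : ℝ => 1 + x + x^2/3) (1 + 2*x/3) x := by
      have := ((hasDerivAt_id x).const_add 1).add (((hasDerivAt_pow 2 x)).div_const 3)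
      exact this.congr_deriv (by ring)
    have h2 := (h1.log (denom_pos x).ne')
    have h3 : HasDerivAt (fun x : ℝ => x^2/6) (x/3) x := by
      have := (hasDerivAt_pow 2 x).div_const 6
      exact this.congr_deriv (by ring)
    have := (h2.sub (hasDerivAt_id x)).add h3
    exact this.congr_deriv (by ring)
  have hmono : StrictMonoOn g (Ici (0:ℝ)) := by
    apply strictMonoOn_of_deriv_pos (convex_Ici 0)
    · exact Continuous.continuousOn (by
        fun_prop (disch := intro x; exact (denom_pos x).ne'))
    · intro x hx
      rw [interior_Ici] at hx
      rw [(hderiv x).deriv]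
      rw [div_sub' (denom_pos x).ne', div_add' _ _ _ (denom_pos x).ne']
      apply div_pos _ (denom_pos x)
      have : (1 + 2*x/3 - (1 + x + x^2/3)) * 1 + x/3 * (1 + x + x^2/3) = x^3/9 := by ring
      nlinarith [pow_pos (mem_Ioi.mp hx) 3, denom_pos x]
  have h0 : g 0 = 0 := by simp [hg]
  have := hmono (le_refl (0:ℝ)) ht.le ht
  rw [h0] at this
  have hlog : t - t^2/6 < Real.log (1 + t + t^2/3) := by simp [hg] at this; linarith
  calc Real.exp (t - t^2/6) < Real.exp (Real.log (1 + t + t^2/3)) := Real.exp_lt_exp.2 hlog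
    _ = 1 + t + t^2/3 := Real.exp_log (denom_pos t)

private lemma lemC : StrictAntiOn (fun w : ℝ => w * Real.exp w) (Iic (-1 : ℝ)) := by
  apply strictAntiOn_of_deriv_neg (convex_Iic _)
  · exact (continuous_id.mul Real.continuous_exp).continuousOn
  · intro x hx
    rw [interior_Iic] at hx
    have h : HasDerivAt (fun w : ℝ => w * Real.exp w) ((1+x) * Real.exp x) x := by
      have := (hasDerivAt_id x).mul (Real.hasDerivAt_exp x)
      refine this.congr_deriv ?_
      simp only [id_eq]; ring
    rw [h.deriv]
    have : (1:ℝ) + x < 0 := by linarith [hx.out]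
    exact mul_neg_of_neg_of_pos this (Real.exp_pos x)

/-- Bounds on the lower branch of the Lambert W function: for all `u > 0`, if `w ≤ -1`
satisfies the defining equation `w·e^w = −e^{−u−1}` (i.e. `w = W₋₁(−e^{−u−1})`), then
`−1 − √(2u) − u < w < −1 − √(2u) − (2/3)u`. -/
theorem stmt_10 (u w : ℝ) (hu : 0 < u) (hw : w ≤ -1)
    (hdef : w * Real.exp w = -Real.exp (-u - 1)) :
    -1 - Real.sqrt (2 * u) - u < w ∧ w < -1 - Real.sqrt (2 * u) - (2 / 3) * u := by
  set t := Real.sqrt (2*u) with htdef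
  have ht : 0 < t := Real.sqrt_pos.2 (by linarith)
  have ht2 : t^2 = 2*u := Real.sq_sqrt (by linarith)
  set a := -1 - t - u with ha
  set b := -1 - t - (2/3)*u with hb
  have haI : a ∈ Iic (-1:ℝ) := by simp [ha]; linarith
  have hbI : b ∈ Iic (-1:ℝ) := by simp [hb]; linarith
  have hwI : w ∈ Iic (-1:ℝ) := hw
  -- f a > f w
  have hfa : -Real.exp (-u-1) < a * Real.exp a := by
    rw [show a * Real.exp a = -((1+t+u) * Real.exp (-1-t-u)) by rw [ha]; ring,
      neg_lt_neg_iff]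
    have key : 1 + t + u < Real.exp t := by
      have := lemA t ht; nlinarith
    calc (1+t+u) * Real.exp (-1-t-u) < Real.exp t * Real.exp (-1-t-u) := by
          apply mul_lt_mul_of_pos_right key (Real.exp_pos _)
      _ = Real.exp (-u-1) := by rw [← Real.exp_add]; ring_nf
  -- f b < f w
  have hfb : b * Real.exp b < -Real.exp (-u-1) := by
    rw [show b * Real.exp b = -((1+t+(2/3)*u) * Real.exp (-1-t-(2/3)*u)) by rw [hb]; ring,
      neg_lt_neg_iff]
    have key : Real.exp (t - t^2/6) < 1 + t + (2/3)*u := by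
      have := lemB t ht; nlinarith
    calc Real.exp (-u-1) = Real.exp (t - t^2/6) * Real.exp (-1-t-(2/3)*u) := by
          rw [← Real.exp_add]; congr 1; rw [ht2]; ring
      _ < (1+t+(2/3)*u) * Real.exp (-1-t-(2/3)*u) := by
          apply mul_lt_mul_of_pos_right key (Real.exp_pos _)
  rw [← hdef] at hfa hfb
  constructor
  · by_contra h
    push_neg at h
    rcases eq_or_lt_of_le h with h | h
    · rw [h] at hfa; exact lt_irrefl _ hfa
    · have := lemC hwI haI h; dsimp only at this; linarith
  · by_contra h
    push_neg at h
    rcases eq_or_lt_of_le h with h | h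
    · rw [← h] at hfb; exact lt_irrefl _ hfb
    · have := lemC hbI hwI h; dsimp only at this; linarith
end

section
/- Let A > 1. If y = −W₋₁(−e^{−A}), then y satisfies y = log y + A and y ≤ A + √(2(A−1)). -/
/-- Let `A > 1` and `y = −W₋₁(−e^{−A})`, i.e. `y ≥ 1` and `(−y)·e^{−y} = −e^{−A}`.
Then `y = log y + A` and `y ≤ A + √(2(A−1))`. -/
theorem stmt_11 (A y : ℝ) (hA : 1 < A) (hy : 1 ≤ y)
    (hdef : -y * Real.exp (-y) = -Real.exp (-A)) :
    y = Real.log y + A ∧ y ≤ A + Real.sqrt (2 * (A - 1)) := by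
  have hy0 : 0 < y := lt_of_lt_of_le one_pos hy
  have h1 : y * Real.exp (-y) = Real.exp (-A) := by linarith [hdef]
  have h2 : Real.log (y * Real.exp (-y)) = Real.log (Real.exp (-A)) := by rw [h1]
  rw [Real.log_mul (ne_of_gt hy0) (Real.exp_ne_zero _), Real.log_exp, Real.log_exp] at h2
  have heq : y = Real.log y + A := by linarith
  refine ⟨heq, ?_⟩
  set u := Real.log y with hu
  have hu0 : 0 ≤ u := Real.log_nonneg hy
  have hyexp : y = Real.exp u := (Real.exp_log hy0).symm
  have hquad : 1 + u + u ^ 2 / 2 ≤ Real.exp u := Real.quadratic_le_exp_of_nonneg hu0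
  have hA1 : u ^ 2 ≤ 2 * (A - 1) := by nlinarith
  have : u ≤ Real.sqrt (2 * (A - 1)) := by
    rw [show u = Real.sqrt (u ^ 2) by rw [Real.sqrt_sq hu0]]
    exact Real.sqrt_le_sqrt hA1
  linarith
end
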